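/- Let K be a field of characteristic zero, n, m ≥ 1, and let p, q ∈ K[x] be monic of degrees n and m respectively. Then m p' q − n p q' = λ̃ for a constant λ̃ = nλ(1−m−n) with λ ∈ K^× if and only if p^m − q^n = nλ x^{mn−m−n+1} + (terms of degree < mn−m−n+1). -/

import Mathlib

open Polynomial

lemma lemA {K : Type*} [Field K] {n m : ℕ} (hm : 1 ≤ m) (q : Polynomial K)
    (hq : q.Monic) (hqm : q.natDegree = m) (H : Polynomial K) :
    (derivative H * q - (n : Polynomial K) * derivative q * H).coeff (H.natDegree + (m - 1))
      = ((H.natDegree : K) - (n : K) * (m : K)) * H.leadingCoeff ∧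
    (derivative H * q - (n : Polynomial K) * derivative q * H).natDegree
      ≤ H.natDegree + (m - 1) := by
  obtain ⟨mm, rfl⟩ : ∃ mm, m = mm + 1 := ⟨m - 1, by omega⟩
  simp only [Nat.add_sub_cancel]
  have hql : q.coeff (mm + 1) = 1 := by
    rw [← hqm, coeff_natDegree]; exact hq.leadingCoeff
  have hqd : ((n : Polynomial K) * derivative q).natDegree ≤ mm := by
    refine natDegree_mul_le.trans ?_
    have := natDegree_derivative_le q
    simp only [natDegree_natCast, zero_add]
    omega
  have hder0 : H.natDegree = 0 → derivative H = 0 := by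
    intro h0
    have := Polynomial.eq_C_of_natDegree_eq_zero h0
    rw [this]; simp
  constructor
  · rw [coeff_sub]
    have h1 : (derivative H * q).coeff (H.natDegree + mm)
        = (H.natDegree : K) * H.leadingCoeff := by
      rcases Nat.eq_zero_or_pos H.natDegree with h0 | h0
      · simp [hder0 h0, h0]
      · obtain ⟨dd, hdd⟩ : ∃ dd, H.natDegree = dd + 1 := ⟨H.natDegree - 1, by omega⟩
        have hD : (derivative H).natDegree ≤ dd := by
          have := natDegree_derivative_le H
          omega
        have he : H.natDegree + mm = dd + (mm + 1) := by omega
        rw [he, coeff_mul_add_eq_of_natDegree_le hD (le_of_eq hqm), hql, coeff_derivative,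
          ← hdd, ← leadingCoeff, hdd]
        push_cast
        ring
    have h2 : ((n : Polynomial K) * derivative q * H).coeff (H.natDegree + mm)
        = (n : K) * (mm + 1 : K) * H.leadingCoeff := by
      rw [add_comm H.natDegree mm, coeff_mul_add_eq_of_natDegree_le hqd le_rfl,
        coeff_natCast_mul, coeff_derivative, hql, ← leadingCoeff]
      push_cast
      ring
    rw [h1, h2]
    push_cast
    ring
  · refine (natDegree_sub_le _ _).trans (max_le ?_ ?_)
    · rcases Nat.eq_zero_or_pos H.natDegree with h0 | h0
      · simp [hder0 h0]
      · refine natDegree_mul_le.trans ?_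
        have := natDegree_derivative_le H
        omega
    · refine natDegree_mul_le.trans ?_
      omega

/-- Let `K` be a field of characteristic zero, `n, m ≥ 1`, and
`p, q ∈ K[x]` monic of degrees `n` and `m`.  Then `m p' q − n p q' = λ̃` with
`λ̃ = nλ(1−m−n)`, `λ ∈ K^×`, if and only if
`p^m − q^n = nλ x^{mn−m−n+1} + (terms of degree < mn−m−n+1)`.
Note `mn − m − n + 1 = (m-1)(n-1)`. -/
theorem statement5 (K : Type*) [Field K] [CharZero K] (n m : ℕ)
    (hn : 1 ≤ n) (hm : 1 ≤ m) (p q : Polynomial K)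
    (hp : p.Monic) (hq : q.Monic) (hpn : p.natDegree = n) (hqm : q.natDegree = m)
    (lam : K) (hlam : lam ≠ 0) :
    (m : Polynomial K) * p.derivative * q - (n : Polynomial K) * p * q.derivative =
        Polynomial.C ((n : K) * lam * (1 - (m : K) - (n : K))) ↔
      (p ^ m - q ^ n - Polynomial.C ((n : K) * lam) * Polynomial.X ^ ((m - 1) * (n - 1))).degree <
        (((m - 1) * (n - 1) : ℕ) : WithBot ℕ) := by
  set D : ℕ := (m - 1) * (n - 1) with hD
  set c : K := (n : K) * lam * (1 - (m : K) - (n : K)) with hc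
  have hc1 : (1 : K) - (m : K) - (n : K) ≠ 0 := by
    intro h
    have h2 : ((m + n : ℕ) : K) = ((1 : ℕ) : K) := by push_cast; linear_combination -h
    have h3 : m + n = 1 := Nat.cast_inj.mp h2
    omega
  have hn0 : (n : K) ≠ 0 := Nat.cast_ne_zero.mpr (by omega)
  have hcne : c ≠ 0 := mul_ne_zero (mul_ne_zero hn0 hlam) hc1
  have hnl : (n : K) * lam ≠ 0 := mul_ne_zero hn0 hlam
  have hDK : ((D : K) - (n : K) * (m : K)) = 1 - (m : K) - (n : K) := by
    rw [hD]
    push_cast [Nat.cast_sub hm, Nat.cast_sub hn]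
    ring
  have hDe : D + (m - 1) = n * (m - 1) := by rw [hD]; cases n <;> cases m <;> simp <;> ring_nf <;> omega
  set F : Polynomial K := p ^ m - q ^ n with hF
  set W : Polynomial K := (m : Polynomial K) * p.derivative * q -
      (n : Polynomial K) * p * q.derivative with hW
  have hpm1 : (p ^ (m - 1)).Monic := hp.pow _
  have hpm1ne : p ^ (m - 1) ≠ 0 := hpm1.ne_zero
  have hpmd : (p ^ (m - 1)).natDegree = n * (m - 1) := by
    rw [natDegree_pow, hpn]; ring
  have hid : derivative F * q - (n : Polynomial K) * derivative q * F
      = p ^ (m - 1) * W := by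
    have hpm : p ^ m = p ^ (m - 1) * p := by rw [← pow_succ]; congr 1; omega
    have hqn : q ^ n = q ^ (n - 1) * q := by rw [← pow_succ]; congr 1; omega
    rw [hF, hW, derivative_sub, derivative_pow, derivative_pow, hpm, hqn]
    simp only [C_eq_natCast]
    ring
  have hFd : F.natDegree < m * n := by
    rcases eq_or_ne F 0 with h0 | h0
    · rw [h0, natDegree_zero]; exact Nat.mul_pos (by omega) (by omega)
    · rw [natDegree_lt_iff_degree_lt h0]
      have h1 : (p ^ m).degree = ((m * n : ℕ) : WithBot ℕ) := by
        rw [degree_eq_natDegree (hp.pow m).ne_zero, natDegree_pow, hpn]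
      calc F.degree < (p ^ m).degree := by
            refine degree_sub_lt ?_ (hp.pow m).ne_zero ?_
            · rw [degree_eq_natDegree (hp.pow m).ne_zero,
                degree_eq_natDegree (hq.pow n).ne_zero, natDegree_pow, natDegree_pow,
                hpn, hqm]
              norm_cast
              ring
            · rw [(hp.pow m).leadingCoeff, (hq.pow n).leadingCoeff]
        _ = ((m * n : ℕ) : WithBot ℕ) := h1
  obtain ⟨hA1, hA2⟩ := lemA (n := n) hm q hq hqm F
  constructor
  · -- forward
    intro hWc
    have hLc : derivative F * q - (n : Polynomial K) * derivative q * F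
        = C c * p ^ (m - 1) := by rw [hid, hWc, mul_comm]
    have hFne : F ≠ 0 := by
      intro h0
      have hne : C c * p ^ (m - 1) ≠ 0 :=
        mul_ne_zero (by simpa using hcne) hpm1ne
      rw [h0] at hLc
      simp only [derivative_zero, zero_mul, mul_zero, sub_zero] at hLc
      exact hne hLc.symm
    have hcoeffne : F.coeff F.natDegree ≠ 0 := by
      rw [coeff_natDegree]; exact leadingCoeff_ne_zero.mpr hFne
    have hdne : ((F.natDegree : K) - (n : K) * (m : K)) ≠ 0 := by
      intro h
      have h2 : ((F.natDegree : ℕ) : K) = ((m * n : ℕ) : K) := by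
        push_cast; linear_combination h
      have h3 : F.natDegree = m * n := Nat.cast_inj.mp h2
      omega
    have hcoefne2 : (derivative F * q - (n : Polynomial K) * derivative q * F).coeff
        (F.natDegree + (m - 1)) ≠ 0 := by
      rw [hA1]
      exact mul_ne_zero hdne (leadingCoeff_ne_zero.mpr hFne)
    have hle : F.natDegree + (m - 1) ≤ n * (m - 1) := by
      have := le_natDegree_of_ne_zero hcoefne2
      rwa [hLc, natDegree_C_mul hcne, hpmd] at this
    have hge : (derivative F * q - (n : Polynomial K) * derivative q * F).natDegree
        ≤ F.natDegree + (m - 1) := hA2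
    have hnd : F.natDegree = D := by
      rw [hLc, natDegree_C_mul hcne, hpmd] at hge
      rw [← hDe] at hge hle
      omega
    have hlcF : F.leadingCoeff = (n : K) * lam := by
      have h1 : (derivative F * q - (n : Polynomial K) * derivative q * F).coeff
          (F.natDegree + (m - 1)) = c := by
        rw [hLc, hnd, hDe, ← hpmd, coeff_C_mul, coeff_natDegree, hpm1.leadingCoeff, mul_one]
      rw [hA1, hnd, hDK, hc] at h1
      have := mul_left_cancel₀ hc1 (h1.trans (by ring) : (1 - (m:K) - n) * F.leadingCoeff
        = (1 - (m:K) - n) * ((n:K) * lam))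
      exact this
    have hg : (C ((n : K) * lam) * X ^ D).degree = (D : WithBot ℕ) :=
      degree_C_mul_X_pow D hnl
    have := degree_sub_lt (q := C ((n : K) * lam) * X ^ D)
      (by rw [hg, degree_eq_natDegree hFne, hnd]) hFne
      (by rw [hlcF]; rw [leadingCoeff_C_mul_X_pow])
    rw [degree_eq_natDegree hFne, hnd] at this
    exact this
  · -- backward
    intro hdeg
    set g : Polynomial K := C ((n : K) * lam) * X ^ D with hg
    have hgd : g.degree = (D : WithBot ℕ) := degree_C_mul_X_pow D hnl
    have hFdeg : F.degree = (D : WithBot ℕ) := by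
      have h1 : F = g + (F - g) := by ring
      rw [h1, degree_add_eq_left_of_degree_lt (by rw [hgd]; exact hdeg), hgd]
    have hFne : F ≠ 0 := by
      intro h0
      rw [h0, degree_zero] at hFdeg
      exact absurd hFdeg (by simp)
    have hnd : F.natDegree = D := natDegree_eq_of_degree_eq_some hFdeg
    have hlcF : F.leadingCoeff = (n : K) * lam := by
      rw [leadingCoeff, hnd]
      have h1 : (F - g).coeff D = 0 := coeff_eq_zero_of_degree_lt hdeg
      have h2 : F.coeff D - g.coeff D = 0 := by rw [← coeff_sub]; exact h1
      rw [sub_eq_zero] at h2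
      rw [h2, hg, coeff_C_mul, coeff_X_pow_self, mul_one]
    have hLcoeff : (derivative F * q - (n : Polynomial K) * derivative q * F).coeff
        (D + (m - 1)) = c := by
      rw [← hnd, hA1, hnd, hDK, hlcF, hc]; ring
    have hLne : p ^ (m - 1) * W ≠ 0 := by
      rw [← hid]
      intro h0
      rw [h0, coeff_zero] at hLcoeff
      exact hcne hLcoeff.symm
    have hWne : W ≠ 0 := by
      intro h0; rw [h0, mul_zero] at hLne; exact hLne rfl
    have hLd : (p ^ (m - 1) * W).natDegree = n * (m - 1) := by
      have h1 : n * (m - 1) ≤ (p ^ (m - 1) * W).natDegree := by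
        rw [← hid]
        have := le_natDegree_of_ne_zero (hLcoeff ▸ hcne)
        omega
      have h2 : (p ^ (m - 1) * W).natDegree ≤ n * (m - 1) := by
        rw [← hid]; rw [hnd] at hA2; omega
      omega
    have hWd : W.natDegree = 0 := by
      have := natDegree_mul hpm1ne hWne
      rw [hLd, hpmd] at this
      omega
    have hWC : W = C (W.coeff 0) := eq_C_of_natDegree_eq_zero hWd
    have hlcW : W.coeff 0 = c := by
      have h1 : (p ^ (m - 1) * W).leadingCoeff = W.leadingCoeff := by
        rw [leadingCoeff_mul, hpm1.leadingCoeff, one_mul]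
      have h2 : (p ^ (m - 1) * W).leadingCoeff = c := by
        rw [leadingCoeff, hLd, ← hDe, ← hid, hLcoeff]
      rw [← h2, h1, leadingCoeff, hWd]
    rw [hWC, hlcW]
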